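/- Let k ≥ 1 and ρ ≥ 2 be natural numbers and let p', q' : Fin (k·ρ) → ℝ be positive vectors. Define the block-aggregated vectors p, q : Fin k → ℝ by p_r = Σ_{i=0}^{ρ-1} p'_{rρ+i} and q_r = Σ_{i=0}^{ρ-1} q'_{rρ+i}. Suppose there exists a block r and indices i, j ∈ {0, ..., ρ-1} such that p'_{rρ+i} · q'_{rρ+j} ≠ p'_{rρ+j} · q'_{rρ+i}. Then for every λ ∈ (0,1), Σ_{r=0}^{k-1} p_r^{1-λ} q_r^{λ} > Σ_{j=0}^{kρ-1} p'_j^{1-λ} q'_j^{λ}. -/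

import Mathlib

/-- Strict weighted AM-GM for two distinct positive reals. -/
lemma young_strict {a b l : ℝ} (ha : 0 < a) (hb : 0 < b) (hab : a ≠ b)
    (hl0 : 0 < l) (hl1 : l < 1) :
    a ^ (1 - l) * b ^ l < (1 - l) * a + l * b := by
  have hlog : (1 - l) * Real.log a + l * Real.log b
      < Real.log ((1 - l) * a + l * b) := by
    have := strictConcaveOn_log_Ioi.2 (Set.mem_Ioi.2 ha) (Set.mem_Ioi.2 hb)
      hab (show (0:ℝ) < 1 - l by linarith) hl0 (show (1 - l) + l = 1 by ring)
    simpa [smul_eq_mul] using this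
  have h1 : a ^ (1 - l) * b ^ l
      = Real.exp ((1 - l) * Real.log a + l * Real.log b) := by
    rw [Real.exp_add, Real.rpow_def_of_pos ha, Real.rpow_def_of_pos hb,
      mul_comm (Real.log a), mul_comm (Real.log b)]
  have h1l : 0 < 1 - l := by linarith
  have hpos : 0 < (1 - l) * a + l * b := by positivity
  calc a ^ (1 - l) * b ^ l = Real.exp ((1 - l) * Real.log a + l * Real.log b) := h1
    _ < Real.exp (Real.log ((1 - l) * a + l * b)) := Real.exp_lt_exp.2 hlog
    _ = (1 - l) * a + l * b := Real.exp_log hpos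

lemma young_le {a b l : ℝ} (ha : 0 ≤ a) (hb : 0 ≤ b)
    (hl0 : 0 ≤ l) (hl1 : l ≤ 1) :
    a ^ (1 - l) * b ^ l ≤ (1 - l) * a + l * b :=
  Real.geom_mean_le_arith_mean2_weighted (by linarith) hl0 ha hb (by ring)

/-- Per-block superadditivity, non-strict version with a term-by-term bound. -/
lemma block_le {n : ℕ} (a b : Fin n → ℝ) (ha : ∀ i, 0 < a i) (hb : ∀ i, 0 < b i)
    {l : ℝ} (hl0 : 0 < l) (hl1 : l < 1) :
    ∑ i, a i ^ (1 - l) * b i ^ l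
      ≤ (∑ i, a i) ^ (1 - l) * (∑ i, b i) ^ l := by
  rcases Nat.eq_zero_or_pos n with rfl | hn
  · simp [Real.zero_rpow (by linarith : (1 : ℝ) - l ≠ 0)]
  have hA : 0 < ∑ i, a i := Finset.sum_pos (fun i _ => ha i) (by
    simpa [Finset.univ_nonempty_iff] using Fin.pos_iff_nonempty.mp hn)
  have hB : 0 < ∑ i, b i := Finset.sum_pos (fun i _ => hb i) (by
    simpa [Finset.univ_nonempty_iff] using Fin.pos_iff_nonempty.mp hn)
  set A := ∑ i, a i
  set B := ∑ i, b i
  have key : ∀ i, a i ^ (1 - l) * b i ^ l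
      ≤ A ^ (1 - l) * B ^ l * ((1 - l) * (a i / A) + l * (b i / B)) := by
    intro i
    have h := young_le (a := a i / A) (b := b i / B) (l := l)
      (div_nonneg (ha i).le hA.le) (div_nonneg (hb i).le hB.le) hl0.le hl1.le
    have hAB : 0 < A ^ (1 - l) * B ^ l := by positivity
    have := mul_le_mul_of_nonneg_left h hAB.le
    calc a i ^ (1 - l) * b i ^ l
        = A ^ (1 - l) * B ^ l * ((a i / A) ^ (1 - l) * (b i / B) ^ l) := by
          rw [Real.div_rpow (ha i).le hA.le, Real.div_rpow (hb i).le hB.le]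
          field_simp
      _ ≤ A ^ (1 - l) * B ^ l * ((1 - l) * (a i / A) + l * (b i / B)) := this
  calc ∑ i, a i ^ (1 - l) * b i ^ l
      ≤ ∑ i, A ^ (1 - l) * B ^ l * ((1 - l) * (a i / A) + l * (b i / B)) :=
        Finset.sum_le_sum fun i _ => key i
    _ = A ^ (1 - l) * B ^ l := by
        rw [← Finset.mul_sum]
        have : ∑ i, ((1 - l) * (a i / A) + l * (b i / B)) = 1 := by
          rw [Finset.sum_add_distrib, ← Finset.mul_sum, ← Finset.mul_sum,
            ← Finset.sum_div, ← Finset.sum_div]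
          field_simp
          change ((1 - l) * A) * B + l * A * B = A * B
          ring
        rw [this, mul_one]

/-- Per-block strict superadditivity under non-proportionality. -/
lemma block_lt {n : ℕ} (a b : Fin n → ℝ) (ha : ∀ i, 0 < a i) (hb : ∀ i, 0 < b i)
    {l : ℝ} (hl0 : 0 < l) (hl1 : l < 1)
    (h : ∃ i j, a i * b j ≠ a j * b i) :
    ∑ i, a i ^ (1 - l) * b i ^ l
      < (∑ i, a i) ^ (1 - l) * (∑ i, b i) ^ l := by
  obtain ⟨i₀, j₀, hij⟩ := h
  have hn : 0 < n := i₀.pos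
  have hA : 0 < ∑ i, a i := Finset.sum_pos (fun i _ => ha i) (by
    simpa [Finset.univ_nonempty_iff] using Fin.pos_iff_nonempty.mp hn)
  have hB : 0 < ∑ i, b i := Finset.sum_pos (fun i _ => hb i) (by
    simpa [Finset.univ_nonempty_iff] using Fin.pos_iff_nonempty.mp hn)
  set A := ∑ i, a i with hAdef
  set B := ∑ i, b i with hBdef
  -- there is an index where a i / A ≠ b i / B
  have hex : ∃ i, a i / A ≠ b i / B := by
    by_contra hcon
    push_neg at hcon
    apply hij
    have hi := hcon i₀
    have hj := hcon j₀
    have hi' : a i₀ * B = b i₀ * A := by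
      field_simp at hi; linarith [hi]
    have hj' : a j₀ * B = b j₀ * A := by
      field_simp at hj; linarith [hj]
    have : a i₀ * b j₀ * (A * B) = a j₀ * b i₀ * (A * B) := by
      linear_combination (b j₀ * A) * hi' - (b i₀ * A) * hj'
    have hAB : (A * B) ≠ 0 := by positivity
    exact mul_right_cancel₀ hAB this
  obtain ⟨i₁, hi₁⟩ := hex
  have hABpos : 0 < A ^ (1 - l) * B ^ l := by positivity
  have key_le : ∀ i, a i ^ (1 - l) * b i ^ l
      ≤ A ^ (1 - l) * B ^ l * ((1 - l) * (a i / A) + l * (b i / B)) := by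
    intro i
    have h := young_le (a := a i / A) (b := b i / B) (l := l)
      (div_nonneg (ha i).le hA.le) (div_nonneg (hb i).le hB.le) hl0.le hl1.le
    have := mul_le_mul_of_nonneg_left h hABpos.le
    calc a i ^ (1 - l) * b i ^ l
        = A ^ (1 - l) * B ^ l * ((a i / A) ^ (1 - l) * (b i / B) ^ l) := by
          rw [Real.div_rpow (ha i).le hA.le, Real.div_rpow (hb i).le hB.le]
          field_simp
      _ ≤ _ := this
  have key_lt : a i₁ ^ (1 - l) * b i₁ ^ l
      < A ^ (1 - l) * B ^ l * ((1 - l) * (a i₁ / A) + l * (b i₁ / B)) := by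
    have h := young_strict (a := a i₁ / A) (b := b i₁ / B) (l := l)
      (div_pos (ha i₁) hA) (div_pos (hb i₁) hB) hi₁ hl0 hl1
    have := (mul_lt_mul_iff_right₀ hABpos).2 h
    calc a i₁ ^ (1 - l) * b i₁ ^ l
        = A ^ (1 - l) * B ^ l * ((a i₁ / A) ^ (1 - l) * (b i₁ / B) ^ l) := by
          rw [Real.div_rpow (ha i₁).le hA.le, Real.div_rpow (hb i₁).le hB.le]
          field_simp
      _ < _ := this
  calc ∑ i, a i ^ (1 - l) * b i ^ l
      < ∑ i, A ^ (1 - l) * B ^ l * ((1 - l) * (a i / A) + l * (b i / B)) :=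
        Finset.sum_lt_sum (fun i _ => key_le i) ⟨i₁, Finset.mem_univ _, key_lt⟩
    _ = A ^ (1 - l) * B ^ l := by
        rw [← Finset.mul_sum]
        have : ∑ i, ((1 - l) * (a i / A) + l * (b i / B)) = 1 := by
          rw [Finset.sum_add_distrib, ← Finset.mul_sum, ← Finset.mul_sum,
            ← Finset.sum_div, ← Finset.sum_div]
          field_simp
          change ((1 - l) * A) * B + l * A * B = A * B
          ring
        rw [this, mul_one]

/-- The index `r*ρ + i` of the `i`-th fine quantizer cell inside the `r`-th coarse
block, as an element of `Fin (k * ρ)`. -/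
def blockIdx {k ρ : ℕ} (r : Fin k) (i : Fin ρ) : Fin (k * ρ) :=
  ⟨r.val * ρ + i.val, by
    have h1 : r.val * ρ + i.val < (r.val + 1) * ρ := by
      rw [Nat.succ_mul]; exact Nat.add_lt_add_left i.isLt _
    exact lt_of_lt_of_le h1 (Nat.mul_le_mul_right ρ r.isLt)⟩

/-- If within some block the fine cells are not proportional (the classification
task is learnable), merging `ρ ≥ 2` consecutive quantizer cells strictly decreases
the Chernoff-type sum: for every `λ ∈ (0,1)`,
`∑ r, p r ^ (1-λ) * q r ^ λ > ∑ j, p' j ^ (1-λ) * q' j ^ λ`. -/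
theorem block_aggregation_chernoff_sum_gt
    (k ρ : ℕ) (hk : 1 ≤ k) (hρ : 2 ≤ ρ)
    (p' q' : Fin (k * ρ) → ℝ)
    (hp' : ∀ j, 0 < p' j) (hq' : ∀ j, 0 < q' j)
    (p q : Fin k → ℝ)
    (hp : ∀ r, p r = ∑ i : Fin ρ, p' (blockIdx r i))
    (hq : ∀ r, q r = ∑ i : Fin ρ, q' (blockIdx r i))
    (hlearn : ∃ (r : Fin k) (i j : Fin ρ),
        p' (blockIdx r i) * q' (blockIdx r j) ≠ p' (blockIdx r j) * q' (blockIdx r i))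
    (l : ℝ) (hl : l ∈ Set.Ioo (0 : ℝ) 1) :
    ∑ r, p r ^ (1 - l) * q r ^ l > ∑ j, p' j ^ (1 - l) * q' j ^ l := by
  obtain ⟨hl0, hl1⟩ := hl
  -- reindex the fine sum into a double sum over blocks
  have hre : ∑ j, p' j ^ (1 - l) * q' j ^ l
      = ∑ r : Fin k, ∑ i : Fin ρ,
          p' (blockIdx r i) ^ (1 - l) * q' (blockIdx r i) ^ l := by
    have h1 : (∑ j, p' j ^ (1 - l) * q' j ^ l)
        = ∑ x : Fin k × Fin ρ,
            p' (blockIdx x.1 x.2) ^ (1 - l) * q' (blockIdx x.1 x.2) ^ l := by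
      refine (Fintype.sum_equiv finProdFinEquiv
        (fun x => p' (blockIdx x.1 x.2) ^ (1 - l) * q' (blockIdx x.1 x.2) ^ l)
        (fun j => p' j ^ (1 - l) * q' j ^ l) (fun x => ?_)).symm
      have : blockIdx x.1 x.2 = finProdFinEquiv x := by
        apply Fin.ext
        show x.1.val * ρ + x.2.val = x.2.val + ρ * x.1.val
        ring
      show p' (blockIdx x.1 x.2) ^ (1 - l) * q' (blockIdx x.1 x.2) ^ l
        = p' (finProdFinEquiv x) ^ (1 - l) * q' (finProdFinEquiv x) ^ l
      rw [this]
    rw [h1, Fintype.sum_prod_type]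
  rw [hre]
  obtain ⟨r₀, i₀, j₀, hr₀⟩ := hlearn
  apply Finset.sum_lt_sum
  · intro r _
    rw [hp r, hq r]
    exact block_le (fun i => p' (blockIdx r i)) (fun i => q' (blockIdx r i))
      (fun i => hp' _) (fun i => hq' _) hl0 hl1
  · refine ⟨r₀, Finset.mem_univ _, ?_⟩
    rw [hp r₀, hq r₀]
    exact block_lt (fun i => p' (blockIdx r₀ i)) (fun i => q' (blockIdx r₀ i))
      (fun i => hp' _) (fun i => hq' _) hl0 hl1 ⟨i₀, j₀, hr₀⟩
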